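/- Let ν > −1 and let N, n be nonnegative integers. The function T(x) = x^{N + 1/2} · (N! n! / (N + n)!) · P_n^{(N,ν)}(1 − 2x²) satisfies, for every x ∈ (0,1), the differential equation (1 − x²) T''(x) − 2(ν+1) x T'(x) + ((1/4 − N²)/x²) T(x) = −(N + 2n + 1/2)(N + 2ν + 2n + 3/2) · T(x). In other words, T is an eigenfunction of the operator L_{0,N,ν} with eigenvalue −(N + 2n + 1/2)(N + 2ν + 2n + 3/2). -/

import Mathlib

open Real MeasureTheory

/-- Pochhammer symbol `(a)_k = a (a+1) ⋯ (a+k-1)`. -/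
noncomputable def poch (a : ℝ) (k : ℕ) : ℝ := ∏ i ∈ Finset.range k, (a + i)

/-- Bessel function of the first kind of real order `μ`, via its defining series. -/
noncomputable def besselJ (μ x : ℝ) : ℝ :=
  ∑' k : ℕ, (-1) ^ k / (k.factorial * Real.Gamma (μ + k + 1)) * (x / 2) ^ (2 * (k : ℝ) + μ)

/-- Jacobi polynomial `P_n^{(α,β)}(x)` via its hypergeometric series. -/
noncomputable def jacobiP (α β : ℝ) (n : ℕ) (x : ℝ) : ℝ :=
  poch (α + 1) n / n.factorial *
    ∑ k ∈ Finset.range (n + 1),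
      poch (-(n : ℝ)) k * poch ((n : ℝ) + α + β + 1) k / (poch (α + 1) k * k.factorial) *
        ((1 - x) / 2) ^ k

/-- `T^ν_{N,n}(x) = x^{N+1/2} (N! n!/(N+n)!) P_n^{(N,ν)}(1-2x²)`. -/
noncomputable def Tfun (ν : ℝ) (N n : ℕ) (x : ℝ) : ℝ :=
  x ^ ((N : ℝ) + 1 / 2) * ((N.factorial * n.factorial : ℝ) / (N + n).factorial) *
    jacobiP N ν n (1 - 2 * x ^ 2)

/- ### Auxiliary machinery -/

/-- Coefficients of the monomial expansion of `Tfun`. -/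
noncomputable def acoef (ν : ℝ) (N n : ℕ) (k : ℕ) : ℝ :=
  ((N.factorial * n.factorial : ℝ) / (N + n).factorial) * (poch ((N : ℝ) + 1) n / n.factorial) *
    (poch (-(n : ℝ)) k * poch ((n : ℝ) + N + ν + 1) k / (poch ((N : ℝ) + 1) k * k.factorial))

lemma poch_succ (a : ℝ) (k : ℕ) : poch a (k + 1) = poch a k * (a + k) := by
  simp [poch, Finset.prod_range_succ]

lemma poch_natAdd_pos (N : ℕ) (k : ℕ) : 0 < poch ((N : ℝ) + 1) k := by
  apply Finset.prod_pos
  intro i _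
  positivity

lemma acoef_rec (ν : ℝ) (N n k : ℕ) :
    4 * ((k : ℝ) + 1) * ((N : ℝ) + 1 + k) * acoef ν N n (k + 1)
      = 4 * ((k : ℝ) - n) * ((n : ℝ) + N + ν + 1 + k) * acoef ν N n k := by
  unfold acoef
  rw [poch_succ, poch_succ, poch_succ]
  have h1 : poch ((N : ℝ) + 1) k ≠ 0 := (poch_natAdd_pos N k).ne'
  have h2 : ((k + 1).factorial : ℝ) ≠ 0 := by positivity
  have h3 : (k.factorial : ℝ) ≠ 0 := by positivity
  have h4 : ((k + 1).factorial : ℝ) = (k + 1) * k.factorial := by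
    rw [Nat.factorial_succ]; push_cast; ring
  rw [h4]
  have h5 : ((N : ℝ) + 1 + k) ≠ 0 := by positivity
  have h6 : ((k : ℝ) + 1) ≠ 0 := by positivity
  field_simp
  ring

lemma hasDerivAt_sum_rpow (m : ℕ) (a p : ℕ → ℝ) {x : ℝ} (hx : x ≠ 0) :
    HasDerivAt (fun y : ℝ => ∑ k ∈ Finset.range m, a k * y ^ (p k))
      (∑ k ∈ Finset.range m, a k * (p k * x ^ (p k - 1))) x :=
  HasDerivAt.fun_sum fun k _ => (Real.hasDerivAt_rpow_const (Or.inl hx)).const_mul (a k)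

lemma rpow_split {x : ℝ} (hx : 0 < x) (c : ℝ) (k : ℕ) :
    x ^ (c + 2 * (k : ℝ)) = x ^ c * (x ^ 2) ^ k := by
  rw [Real.rpow_add hx]
  congr 1
  rw [← pow_mul, ← Real.rpow_natCast x (2 * k)]
  push_cast
  ring_nf

lemma Tfun_eq_sum (ν : ℝ) (N n : ℕ) {x : ℝ} (hx : 0 < x) :
    Tfun ν N n x = ∑ k ∈ Finset.range (n + 1),
      acoef ν N n k * x ^ ((N : ℝ) + 1 / 2 + 2 * (k : ℝ)) := by
  unfold Tfun jacobiP acoef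
  rw [Finset.mul_sum, Finset.mul_sum]
  apply Finset.sum_congr rfl
  intro k _
  rw [show (1 - (1 - 2 * x ^ 2)) / 2 = x ^ 2 by ring, rpow_split hx]
  ring

theorem Tfun_eigenfunction (ν : ℝ) (hν : ν > -1) (N n : ℕ) :
    ∀ x ∈ Set.Ioo (0:ℝ) 1,
      (1 - x ^ 2) * deriv (deriv (Tfun ν N n)) x - 2 * (ν + 1) * x * deriv (Tfun ν N n) x +
          ((1 / 4 - (N : ℝ) ^ 2) / x ^ 2) * Tfun ν N n x
        = -(((N : ℝ) + 2 * n + 1 / 2) * ((N : ℝ) + 2 * ν + 2 * n + 3 / 2)) * Tfun ν N n x := by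
  intro x hx
  obtain ⟨hx0, hx1⟩ := hx
  set μ : ℝ := (N : ℝ) + 1 / 2 with hμ
  set a : ℕ → ℝ := acoef ν N n with ha
  -- the three explicit sums
  set g : ℝ → ℝ := fun y => ∑ k ∈ Finset.range (n + 1), a k * y ^ (μ + 2 * (k : ℝ)) with hg
  set g1 : ℝ → ℝ := fun y => ∑ k ∈ Finset.range (n + 1),
      (a k * (μ + 2 * (k : ℝ))) * y ^ (μ - 1 + 2 * (k : ℝ)) with hg1
  have hTg : ∀ y ∈ Set.Ioi (0:ℝ), Tfun ν N n y = g y := by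
    intro y hy
    exact Tfun_eq_sum ν N n hy
  -- derivative of g
  have hgd : ∀ y ∈ Set.Ioi (0:ℝ), HasDerivAt g (g1 y) y := by
    intro y hy
    have := hasDerivAt_sum_rpow (n + 1) a (fun k => μ + 2 * (k : ℝ)) (ne_of_gt hy)
    convert this using 1
    apply Finset.sum_congr rfl
    intro k _
    rw [show μ + 2 * (k : ℝ) - 1 = μ - 1 + 2 * (k : ℝ) by ring]
    ring
  -- derivative of g1
  have hg1d : HasDerivAt g1
      (∑ k ∈ Finset.range (n + 1),
        (a k * (μ + 2 * (k : ℝ)) * (μ - 1 + 2 * (k : ℝ))) * x ^ (μ - 2 + 2 * (k : ℝ))) x := by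
    have := hasDerivAt_sum_rpow (n + 1) (fun k => a k * (μ + 2 * (k : ℝ)))
      (fun k => μ - 1 + 2 * (k : ℝ)) (ne_of_gt hx0)
    convert this using 1
    apply Finset.sum_congr rfl
    intro k _
    rw [show μ - 1 + 2 * (k : ℝ) - 1 = μ - 2 + 2 * (k : ℝ) by ring]
    ring
  have hmem : Set.Ioi (0:ℝ) ∈ nhds x := isOpen_Ioi.mem_nhds hx0
  have hTgev : Tfun ν N n =ᶠ[nhds x] g := Filter.eventuallyEq_of_mem hmem hTg
  have hderiv1 : ∀ y ∈ Set.Ioi (0:ℝ), deriv (Tfun ν N n) y = g1 y := by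
    intro y hy
    have hev : Tfun ν N n =ᶠ[nhds y] g :=
      Filter.eventuallyEq_of_mem (isOpen_Ioi.mem_nhds hy) hTg
    rw [hev.deriv_eq, (hgd y hy).deriv]
  have hd1ev : deriv (Tfun ν N n) =ᶠ[nhds x] g1 := Filter.eventuallyEq_of_mem hmem hderiv1
  have hd2 : deriv (deriv (Tfun ν N n)) x
      = ∑ k ∈ Finset.range (n + 1),
        (a k * (μ + 2 * (k : ℝ)) * (μ - 1 + 2 * (k : ℝ))) * x ^ (μ - 2 + 2 * (k : ℝ)) := by
    rw [hd1ev.deriv_eq, hg1d.deriv]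
  rw [hd2, hderiv1 x hx0, hTg x hx0]
  -- now pure algebra with explicit sums
  set u : ℝ := x ^ 2 with hu
  set lam : ℝ := (μ + 2 * (n : ℝ)) * (μ + 2 * (n : ℝ)) + (2 * ν + 1) * (μ + 2 * (n : ℝ)) with hlam
  have hxne : x ≠ 0 := ne_of_gt hx0
  have hsplit2 : ∀ k : ℕ, x ^ (μ - 2 + 2 * (k : ℝ)) = x ^ (μ - 2) * u ^ k :=
    fun k => rpow_split hx0 (μ - 2) k
  have hsplit1 : ∀ k : ℕ, x ^ (μ - 1 + 2 * (k : ℝ)) = x ^ (μ - 2) * x * u ^ k := by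
    intro k
    rw [rpow_split hx0 (μ - 1) k, show μ - 1 = μ - 2 + 1 by ring, Real.rpow_add hx0,
      Real.rpow_one]
  have hsplit0 : ∀ k : ℕ, x ^ (μ + 2 * (k : ℝ)) = x ^ (μ - 2) * x ^ 2 * u ^ k := by
    intro k
    rw [rpow_split hx0 μ k, show μ = μ - 2 + 2 by ring, Real.rpow_add hx0,
      show x ^ (2:ℝ) = x ^ 2 from Real.rpow_two x,
      show μ - 2 + 2 - 2 = μ - 2 by ring, hu]
  -- key sum identity
  have key : ∑ k ∈ Finset.range (n + 1),
      ((4 * (k:ℝ) * ((k:ℝ) + N)) * a k * u ^ k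
        + ((lam - ((μ + 2*(k:ℝ)) * (μ + 2*(k:ℝ)) + (2*ν+1) * (μ + 2*(k:ℝ)))) * a k) * u ^ (k+1))
      = 0 := by
    rw [Finset.sum_add_distrib]
    rw [Finset.sum_range_succ' (fun k => (4 * (k:ℝ) * ((k:ℝ) + N)) * a k * u ^ k) n]
    rw [Finset.sum_range_succ]
    have hlast : (lam - ((μ + 2*(n:ℝ)) * (μ + 2*(n:ℝ)) + (2*ν+1) * (μ + 2*(n:ℝ)))) * a n
        * u ^ (n+1) = 0 := by
      rw [hlam]; ring
    rw [hlast, add_zero]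
    have h0 : (4 * ((0:ℕ):ℝ) * (((0:ℕ):ℝ) + N)) * a 0 * u ^ (0:ℕ) = 0 := by
      norm_num
    rw [h0, add_zero, ← Finset.sum_add_distrib]
    apply Finset.sum_eq_zero
    intro k _
    have hrec := acoef_rec ν N n k
    rw [← ha] at hrec
    push_cast
    rw [hlam, hμ] at *
    push_cast at hrec ⊢
    linear_combination u ^ (k + 1) * hrec
  -- combine the goal into one sum and use `key`
  have expand : ∀ k ∈ Finset.range (n + 1),
      (1 - x ^ 2) * ((a k * (μ + 2 * (k : ℝ)) * (μ - 1 + 2 * (k : ℝ))) * x ^ (μ - 2 + 2 * (k : ℝ)))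
        - 2 * (ν + 1) * x * ((a k * (μ + 2 * (k : ℝ))) * x ^ (μ - 1 + 2 * (k : ℝ)))
        + ((1 / 4 - (N : ℝ) ^ 2) / x ^ 2) * (a k * x ^ (μ + 2 * (k : ℝ)))
        + lam * (a k * x ^ (μ + 2 * (k : ℝ)))
      = x ^ (μ - 2) *
        ((4 * (k:ℝ) * ((k:ℝ) + N)) * a k * u ^ k
          + ((lam - ((μ + 2*(k:ℝ)) * (μ + 2*(k:ℝ)) + (2*ν+1) * (μ + 2*(k:ℝ)))) * a k) * u ^ (k+1)) := by
    intro k _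
    rw [hsplit2, hsplit1, hsplit0]
    rw [hμ, hu]
    field_simp
    ring
  have main : (1 - u) * (∑ k ∈ Finset.range (n + 1),
        (a k * (μ + 2 * (k : ℝ)) * (μ - 1 + 2 * (k : ℝ))) * x ^ (μ - 2 + 2 * (k : ℝ)))
      - 2 * (ν + 1) * x * g1 x
      + ((1 / 4 - (N : ℝ) ^ 2) / u) * g x
      + lam * g x = 0 := by
    rw [hg, hg1, hu]
    simp only [Finset.mul_sum, ← Finset.sum_sub_distrib, ← Finset.sum_add_distrib]
    rw [Finset.sum_congr rfl expand, ← Finset.mul_sum, key, mul_zero]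
  have hlamgoal : (((N : ℝ) + 2 * n + 1 / 2) * ((N : ℝ) + 2 * ν + 2 * n + 3 / 2)) = lam := by
    rw [hlam, hμ]; ring
  rw [hlamgoal]
  linarith [main]
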